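/- Let n be a positive integer, 0 < ε < 1/4, and let u ∈ Mₙ(ℂ) with ‖u*u − Iₙ‖ < ε and ‖uu* − Iₙ‖ < ε. Then there is a continuous path (u_t)_{t∈[0,1]} in Mₙ(ℂ) with u_0 = u, u_1 = Iₙ, and ‖u_t* u_t − Iₙ‖ < ε, ‖u_t u_t* − Iₙ‖ < ε for all t ∈ [0,1]. -/

import Mathlib

set_option maxHeartbeats 1000000

open scoped Matrix.Norms.L2Operator

set_option maxHeartbeats 1000000 in
noncomputable instance (priority := 50) {n : ℕ} :
    CStarAlgebra (Matrix (Fin n) (Fin n) ℂ) := Matrix.instCStarAlgebra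

set_option maxHeartbeats 1600000 in
/-- Let `n` be a positive integer, `0 < ε < 1/4`, and let `u ∈ Mₙ(ℂ)` with `‖u*u − Iₙ‖ < ε`
and `‖uu* − Iₙ‖ < ε` (operator norm).  Then there is a continuous path `(u t)` in `Mₙ(ℂ)` with
`u 0 = u`, `u 1 = Iₙ`, and `‖u t* u t − Iₙ‖ < ε`, `‖u t u t* − Iₙ‖ < ε` for all `t ∈ [0,1]`. -/
theorem stmt12 {n : ℕ} (hn : 0 < n) {ε : ℝ} (hε0 : 0 < ε) (hε : ε < 1 / 4)
    {u : Matrix (Fin n) (Fin n) ℂ}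
    (hu1 : ‖u.conjTranspose * u - 1‖ < ε) (hu2 : ‖u * u.conjTranspose - 1‖ < ε) :
    ∃ f : ℝ → Matrix (Fin n) (Fin n) ℂ, Continuous f ∧
      f 0 = u ∧ f 1 = 1 ∧
      ∀ t ∈ Set.Icc (0 : ℝ) 1,
        ‖(f t).conjTranspose * f t - 1‖ < ε ∧ ‖f t * (f t).conjTranspose - 1‖ < ε := by
  haveI : Nonempty (Fin n) := ⟨⟨0, hn⟩⟩
  set a := star u * u with ha_def
  set b := u * star u with hb_def
  have hu1' : ‖a - 1‖ < ε := by rwa [ha_def, Matrix.star_eq_conjTranspose]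
  have hu2' : ‖b - 1‖ < ε := by rwa [hb_def, Matrix.star_eq_conjTranspose]
  have ha : IsSelfAdjoint a := by rw [ha_def]; simpa using IsSelfAdjoint.star_mul_self u
  have hb : IsSelfAdjoint b := by rw [hb_def]; simpa using IsSelfAdjoint.mul_star_self u
  have hpos : ∀ x ∈ spectrum ℝ a, 1 - ε < x ∧ x < 1 + ε := by
    intro x hx
    have h1 : x - 1 ∈ spectrum ℝ (a - 1) := by
      have := Set.sub_mem_sub hx (Set.mem_singleton (1:ℝ))
      rwa [spectrum.sub_singleton_eq, map_one] at this
    have h2 : |x - 1| ≤ ‖a - 1‖ := by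
      simpa [Real.norm_eq_abs] using spectrum.norm_le_norm_of_mem h1
    have := lt_of_le_of_lt h2 hu1'
    cases' abs_lt.mp this with h3 h4
    exact ⟨by linarith, by linarith⟩
  have hpos0 : ∀ x ∈ spectrum ℝ a, 0 < x := fun x hx => by
    have := (hpos x hx).1; linarith
  -- the square-root interpolation function
  set H : ℝ → ℝ → ℝ := fun s x => Real.sqrt (s * x⁻¹ + (1 - s)) with hH_def
  have hinv : ContinuousOn (fun x : ℝ => x⁻¹) (spectrum ℝ a) :=
    ContinuousOn.inv₀ continuousOn_id fun x hx => (hpos0 x hx).ne'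
  have hH : ∀ s, ContinuousOn (H s) (spectrum ℝ a) := fun s =>
    Real.continuous_sqrt.comp_continuousOn
      (((continuousOn_const.mul hinv).add continuousOn_const))
  have hHx : ∀ s, ContinuousOn (fun x => H s x * x) (spectrum ℝ a) := fun s =>
    (hH s).mul continuousOn_id
  have hHH : ∀ s, ContinuousOn (fun x => H s x * x * H s x) (spectrum ℝ a) := fun s =>
    (hHx s).mul (hH s)
  set v := cfc (fun x : ℝ => x⁻¹) a with hv_def
  have hva : v * a = 1 := by
    have m1 := cfc_mul (a := a) (f := fun x : ℝ => x⁻¹) (g := fun x : ℝ => x) hinv (by fun_prop)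
    have m2 := cfc_congr (a := a) (f := fun x : ℝ => x⁻¹ * x) (g := fun _ => (1:ℝ))
      fun x hx => inv_mul_cancel₀ (hpos0 x hx).ne'
    rw [hv_def]
    nth_rewrite 2 [← cfc_id' (R := ℝ) (a := a)]
    rw [← m1, m2, cfc_const 1 a, map_one]
  -- key computation 1
  have key1 : ∀ s ∈ Set.Icc (0:ℝ) 1,
      cfc (H s) a * a * cfc (H s) a = s • (1 : Matrix (Fin n) (Fin n) ℂ) + (1 - s) • a := by
    intro s hs
    have m1 := cfc_mul (a := a) (f := H s) (g := fun x : ℝ => x) (hH s) (by fun_prop)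
    have m2 := cfc_mul (a := a) (f := fun x => H s x * x) (g := H s) (hHx s) (hH s)
    have e1 : cfc (H s) a * a * cfc (H s) a = cfc (fun x => H s x * x * H s x) a := by
      rw [m2, m1, cfc_id' (R := ℝ) (a := a)]
    have e2 : cfc (fun x => H s x * x * H s x) a = cfc (fun x : ℝ => s + (1 - s) * x) a := by
      refine cfc_congr fun x hx => ?_
      have hx0 := hpos0 x hx
      have hnn : 0 ≤ s * x⁻¹ + (1 - s) := by
        have h1 : 0 ≤ s * x⁻¹ := mul_nonneg hs.1 (by positivity)
        have h2 : (0:ℝ) ≤ 1 - s := by linarith [hs.2]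
        linarith
      have hsq : H s x * H s x = s * x⁻¹ + (1 - s) := Real.mul_self_sqrt hnn
      calc H s x * x * H s x = H s x * H s x * x := by ring
        _ = (s * x⁻¹ + (1 - s)) * x := by rw [hsq]
        _ = s + (1 - s) * x := by field_simp
    have e3 : cfc (fun x : ℝ => s + (1 - s) * x) a
        = s • (1 : Matrix (Fin n) (Fin n) ℂ) + (1 - s) • a := by
      have h1 := cfc_add (a := a) (f := fun _ : ℝ => s) (g := fun x : ℝ => (1 - s) * x)
        (by fun_prop) (by fun_prop)
      rw [h1, cfc_const s a, cfc_const_mul (1 - s) (fun x : ℝ => x) a (by fun_prop),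
        cfc_id' (R := ℝ) (a := a), Algebra.algebraMap_eq_smul_one]
    rw [e1, e2, e3]
  -- key computation 2
  have key2 : ∀ s ∈ Set.Icc (0:ℝ) 1,
      cfc (H s) a * cfc (H s) a = s • v + (1 - s) • (1 : Matrix (Fin n) (Fin n) ℂ) := by
    intro s hs
    have m1 := cfc_mul (a := a) (f := H s) (g := H s) (hH s) (hH s)
    have e2 : cfc (fun x => H s x * H s x) a = cfc (fun x : ℝ => s * x⁻¹ + (1 - s)) a := by
      refine cfc_congr fun x hx => ?_
      have hx0 := hpos0 x hx
      refine Real.mul_self_sqrt ?_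
      have h1 : 0 ≤ s * x⁻¹ := mul_nonneg hs.1 (by positivity)
      have h2 : (0:ℝ) ≤ 1 - s := by linarith [hs.2]
      linarith
    have e3 : cfc (fun x : ℝ => s * x⁻¹ + (1 - s)) a
        = s • v + (1 - s) • (1 : Matrix (Fin n) (Fin n) ℂ) := by
      have h1 := cfc_add (a := a) (f := fun x : ℝ => s * x⁻¹) (g := fun _ : ℝ => 1 - s)
        (continuousOn_const.mul hinv) (by fun_prop)
      rw [h1, cfc_const_mul s (fun x : ℝ => x⁻¹) a hinv, cfc_const _ a,
        Algebra.algebraMap_eq_smul_one, hv_def]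
    rw [← m1, e2, e3]
  -- invertibility of u
  have hUnit_a : IsUnit a := by
    refine (spectrum.zero_notMem_iff ℝ).mp fun h => ?_
    exact absurd (hpos0 0 h) (lt_irrefl 0)
  have hdet : IsUnit u.det := by
    have h1 : IsUnit a.det := (Matrix.isUnit_iff_isUnit_det a).mp hUnit_a
    rw [ha_def, Matrix.det_mul] at h1
    exact (IsUnit.mul_iff.mp h1).2
  have huu : u * u⁻¹ = 1 := Matrix.mul_nonsing_inv u hdet
  have hstar_u : star u = a * u⁻¹ := by rw [ha_def, mul_assoc, huu, mul_one]
  have huvu : u * v * star u = 1 := by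
    rw [hstar_u]
    calc u * v * (a * u⁻¹) = u * (v * a) * u⁻¹ := by simp only [mul_assoc]
      _ = 1 := by rw [hva, mul_one, huu]
  have hgsa : ∀ s : ℝ, IsSelfAdjoint (cfc (H s) a) := fun s => cfc_predicate (H s) a
  have keyA1 : ∀ s ∈ Set.Icc (0:ℝ) 1,
      star (u * cfc (H s) a) * (u * cfc (H s) a)
        = s • (1 : Matrix (Fin n) (Fin n) ℂ) + (1 - s) • a := by
    intro s hs
    rw [star_mul, (hgsa s).star_eq]
    calc cfc (H s) a * star u * (u * cfc (H s) a)
        = cfc (H s) a * (star u * u) * cfc (H s) a := by simp only [mul_assoc]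
      _ = s • (1 : Matrix (Fin n) (Fin n) ℂ) + (1 - s) • a := by
          rw [← ha_def]; exact key1 s hs
  have keyA2 : ∀ s ∈ Set.Icc (0:ℝ) 1,
      (u * cfc (H s) a) * star (u * cfc (H s) a)
        = s • (1 : Matrix (Fin n) (Fin n) ℂ) + (1 - s) • b := by
    intro s hs
    rw [star_mul, (hgsa s).star_eq]
    calc u * cfc (H s) a * (cfc (H s) a * star u)
        = u * (cfc (H s) a * cfc (H s) a) * star u := by simp only [mul_assoc]
      _ = u * (s • v + (1 - s) • (1 : Matrix (Fin n) (Fin n) ℂ)) * star u := by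
          rw [key2 s hs]
      _ = s • (u * v * star u) + (1 - s) • (u * 1 * star u) := by
          rw [mul_add, add_mul, mul_smul_comm, mul_smul_comm, smul_mul_assoc, smul_mul_assoc]
      _ = s • (1 : Matrix (Fin n) (Fin n) ℂ) + (1 - s) • b := by
          rw [huvu, mul_one, hb_def]
  -- the unitary w
  set w := u * cfc (H 1) a with hw_def
  have hw1 : star w * w = 1 := by
    have := keyA1 1 ⟨zero_le_one, le_refl 1⟩
    simpa [hw_def] using this
  have hw2 : w * star w = 1 := by
    have := keyA2 1 ⟨zero_le_one, le_refl 1⟩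
    simpa [hw_def] using this
  have hwn : IsStarNormal w := ⟨hw1.trans hw2.symm⟩
  have hwu : w ∈ unitary (Matrix (Fin n) (Fin n) ℂ) := ⟨hw1, hw2⟩
  have hspecw : spectrum ℂ w ⊆ Metric.sphere 0 1 := spectrum.subset_circle_of_unitary hwu
  -- choosing a point on the circle avoiding the spectrum
  have hsph_conn : IsConnected (Metric.sphere (0:ℂ) 1) :=
    isConnected_sphere (by rw [Complex.rank_real_complex]; norm_num) 0 zero_le_one
  have hsph_inf : (Metric.sphere (0:ℂ) 1).Infinite :=
    hsph_conn.isPreconnected.infinite_of_nontrivial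
      ⟨1, by simp, -1, by simp, by norm_num⟩
  obtain ⟨d, hd_sph, hd_ns⟩ := (hsph_inf.diff (Matrix.finite_spectrum w)).nonempty
  set c : ℂ := -d with hc_def
  have hd_norm : ‖d‖ = 1 := mem_sphere_zero_iff_norm.mp hd_sph
  have hc_norm : ‖c‖ = 1 := by rw [hc_def, norm_neg, hd_norm]
  have hc0 : c ≠ 0 := by intro h; rw [h, norm_zero] at hc_norm; norm_num at hc_norm
  set L : ℂ → ℂ := fun z => Complex.log (z / c) + Complex.log c with hL_def
  have hz_norm : ∀ z ∈ spectrum ℂ w, ‖z‖ = 1 := fun z hz =>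
    mem_sphere_zero_iff_norm.mp (hspecw hz)
  have hz0 : ∀ z ∈ spectrum ℂ w, z ≠ 0 := by
    intro z hz h
    have := hz_norm z hz
    rw [h, norm_zero] at this
    norm_num at this
  have hslit : ∀ z ∈ spectrum ℂ w, z / c ∈ Complex.slitPlane := by
    intro z hz
    by_contra hcon
    rw [Complex.mem_slitPlane_iff] at hcon
    push_neg at hcon
    obtain ⟨h1, h2⟩ := hcon
    have hq : z / c = (((z / c).re : ℝ) : ℂ) := Complex.ext rfl (by simp [h2])
    have hnq : ‖z / c‖ = 1 := by rw [norm_div, hz_norm z hz, hc_norm]; norm_num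
    have habs : |(z / c).re| = 1 := by
      rw [hq] at hnq; simpa using hnq
    have hre : (z / c).re = -1 := by
      rcases abs_cases ((z / c).re) with ⟨he, _⟩ | ⟨he, _⟩ <;> linarith
    have hzc : z = -c := by
      have : z / c * c = z := div_mul_cancel₀ z hc0
      rw [hq, hre] at this
      rw [← this]; push_cast; ring
    rw [hzc, hc_def, neg_neg] at hz
    exact hd_ns hz
  have habs1 : ∀ z ∈ spectrum ℂ w, ‖z‖ = 1 := fun z hz => by
    exact hz_norm z hz
  have hcabs : ‖c‖ = 1 := by exact hc_norm
  have hLre : ∀ z ∈ spectrum ℂ w, (L z).re = 0 := by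
    intro z hz
    rw [hL_def]
    simp only [Complex.add_re, Complex.log_re, norm_div, habs1 z hz, hcabs]
    norm_num
  have hLexp : ∀ z ∈ spectrum ℂ w, Complex.exp (L z) = z := by
    intro z hz
    rw [hL_def]
    simp only []
    rw [Complex.exp_add, Complex.exp_log (div_ne_zero (hz0 z hz) hc0), Complex.exp_log hc0,
      div_mul_cancel₀ _ hc0]
  have hLcont : ContinuousOn L (spectrum ℂ w) := by
    intro z hz
    refine ContinuousAt.continuousWithinAt ?_
    have h1 : ContinuousAt (fun y : ℂ => Complex.log (y / c)) z :=
      ContinuousAt.comp (x := z) (g := Complex.log) (f := fun y : ℂ => y / c)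
        (continuousAt_clog (hslit z hz)) (continuousAt_id.div_const c)
    exact h1.add continuousAt_const
  -- the path of unitaries
  set G : ℝ → ℂ → ℂ := fun s z => Complex.exp ((1 - (s : ℂ)) * L z) with hG_def
  have hGcont : ∀ s, ContinuousOn (G s) (spectrum ℂ w) := fun s =>
    Complex.continuous_exp.comp_continuousOn (continuousOn_const.mul hLcont)
  have hB0 : cfc (G 0) w = w := by
    have e : ∀ z ∈ spectrum ℂ w, G 0 z = z := by
      intro z hz
      rw [hG_def]
      simp only [Complex.ofReal_zero, sub_zero, one_mul]
      exact hLexp z hz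
    rw [cfc_congr e, cfc_id' (R := ℂ) (a := w)]
  have hB1 : cfc (G 1) w = 1 := by
    have e : ∀ z ∈ spectrum ℂ w, G 1 z = 1 := by
      intro z hz
      rw [hG_def]
      simp [Complex.exp_zero]
    rw [cfc_congr e, cfc_const 1 w, map_one]
  have hBstar : ∀ s : ℝ, star (cfc (G s) w) * cfc (G s) w = 1 ∧
      cfc (G s) w * star (cfc (G s) w) = 1 := by
    intro s
    have hstar : star (cfc (G s) w) = cfc (fun z => star (G s z)) w := (cfc_star _ _).symm
    have m1 := cfc_mul (a := w) (f := fun z => star (G s z)) (g := G s)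
      (hGcont s).star (hGcont s)
    have m2 := cfc_mul (a := w) (f := G s) (g := fun z => star (G s z))
      (hGcont s) (hGcont s).star
    have e : ∀ z ∈ spectrum ℂ w, star (G s z) * G s z = 1 := by
      intro z hz
      rw [hG_def]
      simp only [Complex.star_def, ← Complex.exp_conj, map_mul, map_sub, map_one,
        Complex.conj_ofReal, ← Complex.exp_add, ← mul_add]
      have : (starRingEnd ℂ) (L z) + L z = 0 := by
        rw [add_comm, Complex.add_conj, hLre z hz]
        simp
      rw [this, mul_zero, Complex.exp_zero]
    refine ⟨?_, ?_⟩
    · rw [hstar, ← m1, cfc_congr (g := fun _ : ℂ => (1:ℂ)) e, cfc_const 1 w, map_one]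
    · rw [hstar, ← m2, cfc_congr (g := fun _ : ℂ => (1:ℂ))
        (fun z hz => by rw [mul_comm]; exact e z hz), cfc_const 1 w, map_one]
  -- continuity machinery
  have hFc : Continuous (fun p : ℝ × spectrum ℝ a => H p.1 (p.2 : ℝ)) := by
    rw [hH_def]
    exact Real.continuous_sqrt.comp
      ((continuous_fst.mul ((continuous_subtype_val.comp continuous_snd).inv₀
        fun p => (hpos0 _ p.2.2).ne')).add (continuous_const.sub continuous_fst))
  set F : C(ℝ × spectrum ℝ a, ℝ) := ⟨fun p => H p.1 p.2, hFc⟩ with hF_def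
  have hgF : ∀ s : ℝ, cfc (H s) a = cfcHom ha (F.curry s) := by
    intro s
    rw [cfc_apply (H s) a ha (hH s)]
    exact congrArg (cfcHom ha) (ContinuousMap.ext fun x => rfl)
  have hcontA : Continuous fun s : ℝ => u * cfcHom ha (F.curry s) :=
    continuous_const.mul ((cfcHom_isClosedEmbedding ha).continuous.comp F.curry.continuous)
  have hF2c : Continuous (fun p : ℝ × spectrum ℂ w => G p.1 (p.2 : ℂ)) := by
    rw [hG_def]
    exact Complex.continuous_exp.comp
      (((continuous_const.sub (Complex.continuous_ofReal.comp continuous_fst))).mul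
        (hLcont.restrict.comp continuous_snd))
  set F2 : C(ℝ × spectrum ℂ w, ℂ) := ⟨fun p => G p.1 p.2, hF2c⟩ with hF2_def
  have hgF2 : ∀ s : ℝ, cfc (G s) w = cfcHom hwn (F2.curry s) := by
    intro s
    rw [cfc_apply (G s) w hwn (hGcont s)]
    exact congrArg (cfcHom hwn) (ContinuousMap.ext fun x => rfl)
  have hcontB : Continuous fun s : ℝ => cfcHom hwn (F2.curry s) :=
    (cfcHom_isClosedEmbedding hwn).continuous.comp F2.curry.continuous
  -- the path
  refine ⟨fun t => if t ≤ 1/2 then u * cfcHom ha (F.curry (2*t))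
    else cfcHom hwn (F2.curry (2*t - 1)), ?_, ?_, ?_, ?_⟩
  · refine Continuous.if_le ?_ ?_ continuous_id continuous_const ?_
    · exact hcontA.comp (continuous_const.mul continuous_id)
    · exact hcontB.comp ((continuous_const.mul continuous_id).sub continuous_const)
    · intro t ht
      rw [show (2*t - 1 : ℝ) = 0 by rw [ht]; norm_num, show (2*t : ℝ) = 1 by rw [ht]; norm_num,
        ← hgF 1, ← hgF2 0, hB0, ← hw_def]
  · simp only [if_pos (show (0:ℝ) ≤ 1/2 by norm_num)]
    rw [show (2*(0:ℝ)) = 0 by norm_num, ← hgF 0]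
    have hH0 : H 0 = fun _ : ℝ => (1:ℝ) := by
      funext x; rw [hH_def]; norm_num
    rw [hH0, cfc_const 1 a, map_one, mul_one]
  · simp only [if_neg (show ¬ ((1:ℝ) ≤ 1/2) by norm_num)]
    rw [show (2*(1:ℝ) - 1) = 1 by norm_num, ← hgF2 1, hB1]
  · intro t ht
    by_cases htc : t ≤ 1/2
    · simp only [if_pos htc]
      have hs : (2*t : ℝ) ∈ Set.Icc (0:ℝ) 1 := ⟨by linarith [ht.1], by linarith⟩
      have habs : |1 - 2*t| ≤ 1 := abs_le.mpr ⟨by linarith [ht.2], by linarith [ht.1]⟩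
      constructor
      · rw [← Matrix.star_eq_conjTranspose, ← hgF (2*t), keyA1 (2*t) hs]
        have e : (2*t) • (1 : Matrix (Fin n) (Fin n) ℂ) + (1 - 2*t) • a - 1
            = (1 - 2*t) • (a - 1) := by module
        rw [e, norm_smul, Real.norm_eq_abs]
        calc |1 - 2*t| * ‖a - 1‖ ≤ 1 * ‖a - 1‖ :=
              mul_le_mul_of_nonneg_right habs (norm_nonneg _)
          _ = ‖a - 1‖ := one_mul _
          _ < ε := hu1'
      · rw [← Matrix.star_eq_conjTranspose, ← hgF (2*t), keyA2 (2*t) hs]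
        have e : (2*t) • (1 : Matrix (Fin n) (Fin n) ℂ) + (1 - 2*t) • b - 1
            = (1 - 2*t) • (b - 1) := by module
        rw [e, norm_smul, Real.norm_eq_abs]
        calc |1 - 2*t| * ‖b - 1‖ ≤ 1 * ‖b - 1‖ :=
              mul_le_mul_of_nonneg_right habs (norm_nonneg _)
          _ = ‖b - 1‖ := one_mul _
          _ < ε := hu2'
    · simp only [if_neg htc]
      obtain ⟨e1, e2⟩ := hBstar (2*t - 1)
      rw [← hgF2 (2*t - 1)] at *
      constructor
      · rw [← Matrix.star_eq_conjTranspose, e1, sub_self, norm_zero]; exact hε0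
      · rw [← Matrix.star_eq_conjTranspose, e2, sub_self, norm_zero]; exact hε0
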